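/- arXiv:1011.2432 — 7 statements merged into one kernel-verified Lean document; each statement's English description precedes it below -/
import Mathlib

section
/- If a is transcendental over ℂ, then X^4 + X + a cannot be written as a product of two monic quadratic polynomials with coefficients in ℂ(a). -/
open Polynomial IntermediateField

theorem no_root (r : RatFunc ℂ) :
    r ^ 3 - 4 * (algebraMap (Polynomial ℂ) (RatFunc ℂ) X) * r - 1 ≠ 0 := by
  intro hr
  have hint : IsIntegral (Polynomial ℂ) r := by
    refine ⟨X ^ 3 - (C (4 * X) * X + C 1), ?_, ?_⟩
    · refine monic_X_pow_sub (lt_of_le_of_lt (show degree (C (4 * X) * X + C 1 :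
        Polynomial (Polynomial ℂ)) ≤ 2 by compute_degree!) (by decide))
    · simp only [eval₂_sub, eval₂_add, eval₂_mul, eval₂_pow, eval₂_X, eval₂_C, map_mul,
        map_ofNat, Polynomial.aeval_def, eval₂_one, map_one, eval₂_ofNat]
      linear_combination hr
  obtain ⟨p, hp⟩ := IsIntegrallyClosed.isIntegral_iff.mp hint
  rw [← hp] at hr
  have hinj := IsFractionRing.injective (Polynomial ℂ) (RatFunc ℂ)
  have hp0 : p ^ 3 - 4 * X * p - 1 = 0 := by
    apply hinj
    push_cast [map_sub, map_mul, map_pow, map_one, map_ofNat, map_zero]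
    linear_combination hr
  -- degree argument
  have hq : p ^ 3 = 4 * X * p + 1 := by linear_combination hp0
  have hpne : p ≠ 0 := by
    rintro rfl
    simp at hq
  have hdeg : p.natDegree = 0 := by
    have h1 : (p ^ 3).natDegree = 3 * p.natDegree := natDegree_pow p 3
    have h2 : (4 * X * p + 1 : Polynomial ℂ).natDegree ≤ p.natDegree + 1 := by
      refine le_trans (natDegree_add_le _ _) ?_
      simp only [natDegree_one, max_le_iff]
      constructor
      · have := natDegree_mul (show (4 * X : Polynomial ℂ) ≠ 0 by
          intro h; simpa using congrArg (fun q => q.coeff 1) h) hpne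
        simp only [this]
        have : (4 * X : Polynomial ℂ).natDegree = 1 := by compute_degree!
        omega
      · omega
    rw [hq, h1] at * 
    omega
  obtain ⟨c, rfl⟩ : ∃ c, p = C c := ⟨p.coeff 0, eq_C_of_natDegree_eq_zero hdeg⟩
  rw [← C_pow] at hq
  have hc1 := congrArg (fun q => q.coeff 1) hq
  simp [coeff_mul, Finset.Nat.sum_antidiagonal_eq_sum_range_succ_mk,
    Finset.sum_range_succ, coeff_X, coeff_one, coeff_C] at hc1
  -- hc1 : c = 0 hopefully
  rw [← C_pow, coeff_C] at hc1
  simp at hc1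
  rw [hc1] at hq
  simpa using congrArg (fun q => q.coeff 0) hq

theorem keyrel (K : Type*) [Field K] (b α₁ β₁ α₂ β₂ : K)
    (h : (X ^ 4 + X + C b : Polynomial K) =
        (X ^ 2 + C α₁ * X + C β₁) * (X ^ 2 + C α₂ * X + C β₂)) :
    (α₁^2)^3 - 4 * b * α₁^2 - 1 = 0 := by
  have e : ∀ k, (X ^ 4 + X + C b : Polynomial K).coeff k =
      ((X ^ 2 + C α₁ * X + C β₁) * (X ^ 2 + C α₂ * X + C β₂)).coeff k := fun k => by rw [h]
  have h3 := e 3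
  have h2 := e 2
  have h1 := e 1
  have h0 := e 0
  simp [coeff_mul, Finset.Nat.sum_antidiagonal_eq_sum_range_succ_mk,
    Finset.sum_range_succ, coeff_X_pow, coeff_one, coeff_C, coeff_X] at h3 h2 h1 h0
  have hα : α₂ = -α₁ := by linear_combination -h3
  rw [hα] at h2 h1
  have hs : β₁ + β₂ = α₁^2 := by linear_combination -h2
  have hd : α₁*β₂ - α₁*β₁ = 1 := by linear_combination -h1
  linear_combination (-α₁^2*(α₁^2+β₁+β₂))*hs + (α₁*β₂-α₁*β₁+1)*hd + (-4*α₁^2)*h0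

theorem stmt3 (M : Type*) [Field M] [Algebra ℂ M] (a : M) (ha : Transcendental ℂ a) :
    ¬ ∃ α₁ β₁ α₂ β₂ : ℂ⟮a⟯,
      (X ^ 4 + X + C (AdjoinSimple.gen ℂ a) : Polynomial ℂ⟮a⟯) =
        (X ^ 2 + C α₁ * X + C β₁) * (X ^ 2 + C α₂ * X + C β₂) := by
  rintro ⟨α₁, β₁, α₂, β₂, h⟩
  have key := keyrel _ (AdjoinSimple.gen ℂ a) α₁ β₁ α₂ β₂ h
  -- push to M
  set t : ℂ⟮a⟯ := α₁ ^ 2 with ht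
  have keyM : (algebraMap ℂ⟮a⟯ M t) ^ 3 - 4 * a * (algebraMap ℂ⟮a⟯ M t) - 1 = 0 := by
    have := congrArg (algebraMap ℂ⟮a⟯ M) key
    simpa [map_sub, map_mul, map_pow, map_one, map_zero, map_ofNat,
      AdjoinSimple.algebraMap_gen] using this
  -- the lift from RatFunc ℂ
  have hg : Function.Injective (Polynomial.aeval a : Polynomial ℂ →ₐ[ℂ] M) :=
    transcendental_iff_injective.mp ha
  set f : RatFunc ℂ →ₐ[ℂ] M := IsFractionRing.liftAlgHom hg with hf
  have hrange : f.fieldRange = ℂ⟮a⟯ :=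
    IsFractionRing.liftAlgHom_fieldRange_eq_of_range_eq hg
      (Algebra.adjoin_singleton_eq_range_aeval ℂ a).symm
  have hmem : algebraMap ℂ⟮a⟯ M t ∈ f.fieldRange := by
    rw [hrange]; exact t.2
  obtain ⟨r, hr⟩ := hmem
  have hfX : f (algebraMap (Polynomial ℂ) (RatFunc ℂ) X) = a := by
    rw [hf, IsFractionRing.liftAlgHom_apply, IsFractionRing.lift_algebraMap]
    simp
  apply no_root r
  have hfinj : Function.Injective f := f.toRingHom.injective
  apply hfinj
  have hr' : f r = (algebraMap (↥ℂ⟮a⟯) M) t := hr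
  rw [map_zero, map_sub, map_sub, map_mul, map_mul, map_pow, map_one, map_ofNat, hfX, hr']
  exact keyM
end

section
/- There is no pair of relatively prime polynomials p, q ∈ ℂ[X] with q nonzero satisfying p(X)^3 - 4X·p(X)·q(X)^2 - q(X)^3 = 0 in ℂ[X]. -/
open Polynomial

theorem stmt6 (p q : Polynomial ℂ) (hpq : IsCoprime p q)
    (h : p ^ 3 - C 4 * X * p * q ^ 2 - q ^ 3 = 0) : False := by
  have h1 : p ∣ q ^ 3 := ⟨p ^ 2 - C 4 * X * q ^ 2, by linear_combination -h⟩
  have h2 : q ∣ p ^ 3 := by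
    refine dvd_trans (dvd_pow_self q two_ne_zero) ⟨C 4 * X * p + q, ?_⟩
    linear_combination h
  have hup : IsUnit p := (hpq.pow_right (n := 3)).isUnit_of_dvd' dvd_rfl h1
  have huq : IsUnit q := (hpq.symm.pow_right (n := 3)).isUnit_of_dvd' dvd_rfl h2
  obtain ⟨a, ha, hpa⟩ := Polynomial.isUnit_iff.mp hup
  obtain ⟨b, hb, hqb⟩ := Polynomial.isUnit_iff.mp huq
  rw [← hpa, ← hqb] at h
  have h3 := congrArg (fun r => Polynomial.coeff r 1) h
  have e1 : (C a ^ 3 : Polynomial ℂ).coeff 1 = 0 := by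
    rw [← C_pow]; exact coeff_C
  have e2 : (C 4 * X * C a * C b ^ 2 : Polynomial ℂ).coeff 1 = 4 * a * b ^ 2 := by
    have : (C 4 * X * C a * C b ^ 2 : Polynomial ℂ) = C (4 * a * b ^ 2) * X := by
      push_cast [C_pow, C_mul]; ring
    rw [this, coeff_C_mul, coeff_X_one, mul_one]
  have e3 : (C b ^ 3 : Polynomial ℂ).coeff 1 = 0 := by
    rw [← C_pow]; exact coeff_C
  simp only [coeff_sub, coeff_zero, e1, e2, e3] at h3
  have h4 : (4 : ℂ) * a * b ^ 2 = 0 := by linear_combination -h3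
  have h5 : a = 0 ∨ b = 0 := by
    rcases mul_eq_zero.mp h4 with h' | h'
    · rcases mul_eq_zero.mp h' with h'' | h''
      · norm_num at h''
      · exact Or.inl h''
    · exact Or.inr (pow_eq_zero_iff two_ne_zero |>.mp h')
  rcases h5 with h5 | h5
  · exact ha.ne_zero h5
  · exact hb.ne_zero h5
end

section
/- Let ζ₁, ζ₂, ζ₃, ζ₄ be the four (distinct) roots of X^4 + X + a in an algebraically closed field extension of ℂ, where a is transcendental over ℂ. If ζ'₁, ζ'₂, ζ'₃, ζ'₄ are elements with ζ'ᵢ^4 + ζ'ᵢ equal for all i, and ζ'ᵢ + ζ'₄ = ζⱼ + ζₖ + ζ₄ where {i,j,k} = {1,2,3} for each i ∈ {1,2,3}, then a contradiction follows: the ζᵢ cannot all be distinct. -/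
theorem stmt7 (M : Type*) [Field M] [IsAlgClosed M] [Algebra ℂ M]
    (a : M) (ha : Transcendental ℂ a)
    (ζ₁ ζ₂ ζ₃ ζ₄ : M)
    (hdist : ζ₁ ≠ ζ₂ ∧ ζ₁ ≠ ζ₃ ∧ ζ₁ ≠ ζ₄ ∧ ζ₂ ≠ ζ₃ ∧ ζ₂ ≠ ζ₄ ∧ ζ₃ ≠ ζ₄)
    (h₁ : ζ₁ ^ 4 + ζ₁ + a = 0) (h₂ : ζ₂ ^ 4 + ζ₂ + a = 0)
    (h₃ : ζ₃ ^ 4 + ζ₃ + a = 0) (h₄ : ζ₄ ^ 4 + ζ₄ + a = 0)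
    (ζ'₁ ζ'₂ ζ'₃ ζ'₄ : M)
    (h'₁ : ζ'₁ ^ 4 + ζ'₁ = ζ'₄ ^ 4 + ζ'₄)
    (h'₂ : ζ'₂ ^ 4 + ζ'₂ = ζ'₄ ^ 4 + ζ'₄)
    (h'₃ : ζ'₃ ^ 4 + ζ'₃ = ζ'₄ ^ 4 + ζ'₄)
    (e₁ : ζ'₁ + ζ'₄ = ζ₂ + ζ₃ + ζ₄)
    (e₂ : ζ'₂ + ζ'₄ = ζ₁ + ζ₃ + ζ₄)
    (e₃ : ζ'₃ + ζ'₄ = ζ₁ + ζ₂ + ζ₄) : False := by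
  haveI : CharZero M := charZero_of_injective_algebraMap (algebraMap ℂ M).injective
  obtain ⟨d12, d13, d14, d23, d24, d34⟩ := hdist
  -- pairwise relations from the quartic
  have pair : ∀ x y : M, x ^ 4 + x + a = 0 → y ^ 4 + y + a = 0 → x ≠ y →
      x ^ 3 + x ^ 2 * y + x * y ^ 2 + y ^ 3 = -1 := by
    intro x y hx hy hxy
    have h : (x - y) * (x ^ 3 + x ^ 2 * y + x * y ^ 2 + y ^ 3 + 1) = 0 := by
      linear_combination hx - hy
    have h' := (mul_eq_zero.mp h).resolve_left (sub_ne_zero.mpr hxy)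
    linear_combination h'
  have r12 := pair ζ₁ ζ₂ h₁ h₂ d12
  have r13 := pair ζ₁ ζ₃ h₁ h₃ d13
  have r42 := pair ζ₄ ζ₂ h₄ h₂ (Ne.symm d24)
  have r43 := pair ζ₄ ζ₃ h₄ h₃ (Ne.symm d34)
  -- S-relations
  have S1 : ζ₁ ^ 2 + ζ₁ * (ζ₂ + ζ₃) + ζ₂ ^ 2 + ζ₂ * ζ₃ + ζ₃ ^ 2 = 0 := by
    have h : (ζ₂ - ζ₃) * (ζ₁ ^ 2 + ζ₁ * (ζ₂ + ζ₃) + ζ₂ ^ 2 + ζ₂ * ζ₃ + ζ₃ ^ 2) = 0 := by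
      linear_combination r12 - r13
    exact (mul_eq_zero.mp h).resolve_left (sub_ne_zero.mpr d23)
  have S4 : ζ₄ ^ 2 + ζ₄ * (ζ₂ + ζ₃) + ζ₂ ^ 2 + ζ₂ * ζ₃ + ζ₃ ^ 2 = 0 := by
    have h : (ζ₂ - ζ₃) * (ζ₄ ^ 2 + ζ₄ * (ζ₂ + ζ₃) + ζ₂ ^ 2 + ζ₂ * ζ₃ + ζ₃ ^ 2) = 0 := by
      linear_combination r42 - r43
    exact (mul_eq_zero.mp h).resolve_left (sub_ne_zero.mpr d23)
  -- sum of the four roots is zero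
  have hs : ζ₁ + ζ₂ + ζ₃ + ζ₄ = 0 := by
    have h : (ζ₁ - ζ₄) * (ζ₁ + ζ₂ + ζ₃ + ζ₄) = 0 := by
      linear_combination S1 - S4
    exact (mul_eq_zero.mp h).resolve_left (sub_ne_zero.mpr d14)
  -- rewrite the primed roots
  have hz1 : ζ'₁ = -ζ₁ - ζ'₄ := by linear_combination e₁ + hs
  have hz2 : ζ'₂ = -ζ₂ - ζ'₄ := by linear_combination e₂ + hs
  have hz3 : ζ'₃ = -ζ₃ - ζ'₄ := by linear_combination e₃ + hs
  rw [hz1] at h'₁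
  rw [hz2] at h'₂
  rw [hz3] at h'₃
  -- the cubic equations
  have P1 : 4*ζ'₄*ζ₁^3 + 6*ζ'₄^2*ζ₁^2 + (4*ζ'₄^3 - 2)*ζ₁ - a - 2*ζ'₄ = 0 := by
    linear_combination h'₁ - h₁
  have P2 : 4*ζ'₄*ζ₂^3 + 6*ζ'₄^2*ζ₂^2 + (4*ζ'₄^3 - 2)*ζ₂ - a - 2*ζ'₄ = 0 := by
    linear_combination h'₂ - h₂
  have P3 : 4*ζ'₄*ζ₃^3 + 6*ζ'₄^2*ζ₃^2 + (4*ζ'₄^3 - 2)*ζ₃ - a - 2*ζ'₄ = 0 := by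
    linear_combination h'₃ - h₃
  have ht : ζ'₄ ≠ 0 := by
    intro h0
    rw [h0] at P1 P2
    exact d12 (by linear_combination (P2 - P1) / 2)
  -- divided differences of the cubic
  have Q12 : 4*ζ'₄*(ζ₁^2 + ζ₁*ζ₂ + ζ₂^2) + 6*ζ'₄^2*(ζ₁ + ζ₂) + 4*ζ'₄^3 - 2 = 0 := by
    have h : (ζ₁ - ζ₂) * (4*ζ'₄*(ζ₁^2 + ζ₁*ζ₂ + ζ₂^2) + 6*ζ'₄^2*(ζ₁ + ζ₂) + 4*ζ'₄^3 - 2) = 0 := by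
      linear_combination P1 - P2
    exact (mul_eq_zero.mp h).resolve_left (sub_ne_zero.mpr d12)
  have Q13 : 4*ζ'₄*(ζ₁^2 + ζ₁*ζ₃ + ζ₃^2) + 6*ζ'₄^2*(ζ₁ + ζ₃) + 4*ζ'₄^3 - 2 = 0 := by
    have h : (ζ₁ - ζ₃) * (4*ζ'₄*(ζ₁^2 + ζ₁*ζ₃ + ζ₃^2) + 6*ζ'₄^2*(ζ₁ + ζ₃) + 4*ζ'₄^3 - 2) = 0 := by
      linear_combination P1 - P3
    exact (mul_eq_zero.mp h).resolve_left (sub_ne_zero.mpr d13)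
  -- sum of the first three roots
  have hsum : ζ₁ + ζ₂ + ζ₃ = -(3/2) * ζ'₄ := by
    have h : (ζ₂ - ζ₃) * (4*ζ'₄*(ζ₁ + ζ₂ + ζ₃) + 6*ζ'₄^2) = 0 := by
      linear_combination Q12 - Q13
    have h' := (mul_eq_zero.mp h).resolve_left (sub_ne_zero.mpr d23)
    have h'' : ζ'₄ * (4*(ζ₁ + ζ₂ + ζ₃) + 6*ζ'₄) = 0 := by linear_combination h'
    have h3 := (mul_eq_zero.mp h'').resolve_left ht
    linear_combination h3 / 4
  have hz4 : ζ₄ = (3/2) * ζ'₄ := by linear_combination hs - hsum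
  rw [hz4] at h₄
  have hA : 81*ζ'₄^4 + 24*ζ'₄ + 16*a = 0 := by linear_combination 16 * h₄
  -- ζ'₄^3 = -2/5
  have hT : 5*ζ'₄^3 + 2 = 0 := by
    linear_combination 4*ζ'₄*S1 + (6*ζ'₄^2 - 4*ζ'₄*ζ₃)*hsum - Q12
  -- a is algebraic
  have hB : 80*a - 42*ζ'₄ = 0 := by linear_combination 5*hA - 81*ζ'₄*hT
  have key : 320000 * a ^ 3 + 18522 = 0 := by
    linear_combination 9261*hT + (4000*a^2 + 2100*a*ζ'₄ + 1102.5*ζ'₄^2)*hB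
  apply ha
  refine ⟨Polynomial.C (320000 : ℂ) * Polynomial.X ^ 3 + Polynomial.C (18522 : ℂ), ?_, ?_⟩
  · intro h
    have := congrArg (Polynomial.coeff · 3) h
    simp at this
  · simp only [map_add, map_mul, map_pow, Polynomial.aeval_X, Polynomial.aeval_C, map_ofNat]
    linear_combination key
end

section
/- Assume the Galois group of Z^N + Z^{N-1} + a over ℂ(a) acts as the full symmetric group on the set Θ(a) of its N distinct roots. Then for any two distinct subsets A ≠ A' of Θ(a) with |A| = |A'|, the sums Σ_{z∈A} z and Σ_{z∈A'} z are distinct. -/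
open IntermediateField

lemma sum_swap_aux {M : Type*} [Field M] [DecidableEq M] (A : Finset M) (x y : M)
    (hx : x ∈ A) (hy : y ∉ A) :
    ∑ z ∈ A, Equiv.swap x y z = (∑ z ∈ A, z) - x + y := by
  rw [← Finset.add_sum_erase A _ hx, ← Finset.add_sum_erase A (fun z => z) hx]
  have : ∑ z ∈ A.erase x, Equiv.swap x y z = ∑ z ∈ A.erase x, z := by
    refine Finset.sum_congr rfl fun z hz => ?_
    have hzx : z ≠ x := Finset.ne_of_mem_erase hz
    have hzy : z ≠ y := fun h => hy (h ▸ Finset.mem_of_mem_erase hz)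
    exact Equiv.swap_apply_of_ne_of_ne hzx hzy
  rw [this, Equiv.swap_apply_left]
  simp
  ring

theorem stmt10 (M : Type*) [Field M] [IsAlgClosed M] [Algebra ℂ M]
    (N : ℕ) (hN : 2 ≤ N) (a : M)
    (Θ : Finset M) (hΘcard : Θ.card = N)
    (hΘ : ∀ z : M, z ∈ Θ ↔ z ^ N + z ^ (N - 1) + a = 0)
    (hGal : ∀ π : Equiv.Perm M, (∀ z ∈ Θ, π z ∈ Θ) →
      ∃ σ : M ≃ₐ[ℂ] M, σ a = a ∧ ∀ z ∈ Θ, σ z = π z)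
    (A A' : Finset M) (hA : A ⊆ Θ) (hA' : A' ⊆ Θ)
    (hcard : A.card = A'.card) (hne : A ≠ A') :
    (∑ z ∈ A, z) ≠ (∑ z ∈ A', z) := by
  classical
  intro hsum
  haveI : CharZero M := charZero_of_injective_algebraMap (algebraMap ℂ M).injective
  obtain ⟨x, hxA, hxA'⟩ : ∃ x ∈ A, x ∉ A' := by
    by_contra h; push_neg at h
    exact hne (Finset.eq_of_subset_of_card_le h hcard.ge)
  obtain ⟨y, hyA', hyA⟩ : ∃ y ∈ A', y ∉ A := by
    by_contra h; push_neg at h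
    exact hne (Finset.eq_of_subset_of_card_le h hcard.le).symm
  have hxy : x ≠ y := fun h => hxA' (h ▸ hyA')
  have hxΘ := hA hxA
  have hyΘ := hA' hyA'
  obtain ⟨σ, hσa, hσ⟩ := hGal (Equiv.swap x y) (by
    intro z hz
    rcases eq_or_ne z x with rfl | hzx
    · simpa [Equiv.swap_apply_left] using hyΘ
    rcases eq_or_ne z y with rfl | hzy
    · simpa [Equiv.swap_apply_right] using hxΘ
    · simpa [Equiv.swap_apply_of_ne_of_ne hzx hzy] using hz)
  have e1 : σ (∑ z ∈ A, z) = (∑ z ∈ A, z) - x + y := by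
    rw [map_sum, Finset.sum_congr rfl fun z hz => hσ z (hA hz)]
    exact sum_swap_aux A x y hxA hyA
  have e2 : σ (∑ z ∈ A', z) = (∑ z ∈ A', z) - y + x := by
    rw [map_sum, Finset.sum_congr rfl fun z hz => hσ z (hA' hz)]
    rw [Equiv.swap_comm]
    exact sum_swap_aux A' y x hyA' hxA'
  have heq : (∑ z ∈ A, z) - x + y = (∑ z ∈ A', z) - y + x := by
    rw [← e1, ← e2, hsum]
  have h2 : (2 : M) * y = 2 * x := by linear_combination heq - hsum
  exact hxy (mul_left_cancel₀ two_ne_zero h2).symm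
end

section
/- For every n > 1 there exist finite structures ⟨X; X₁,…,Xₙ⟩ and ⟨Y; Y₁,…,Yₙ⟩ in the language of n unary predicates which are both symmetric, are not isomorphic, but whose reducts to the first n-1 predicates are isomorphic. -/
/-- A finite structure with `n` unary predicates is symmetric if each permutation of the
predicates is realized by a bijection of the underlying set. -/
def IsSymmetricStruct {F : Type} (n : ℕ) (P : Fin n → Set F) : Prop :=
  ∀ σ : Equiv.Perm (Fin n), ∃ e : F ≃ F, ∀ i : Fin n, ∀ x : F, x ∈ P i ↔ e x ∈ P (σ i)

/-- Toggle membership of `j`. -/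
def tog {n : ℕ} (j : Fin n) (A : Finset (Fin n)) : Finset (Fin n) :=
  if j ∈ A then A.erase j else insert j A

lemma tog_tog {n : ℕ} (j : Fin n) (A : Finset (Fin n)) : tog j (tog j A) = A := by
  unfold tog
  by_cases h : j ∈ A <;> simp [h, Finset.insert_erase, Finset.erase_insert]

lemma card_tog {n : ℕ} (j : Fin n) (A : Finset (Fin n)) :
    Odd A.card ↔ Even ((tog j A).card) := by
  unfold tog
  by_cases h : j ∈ A
  · have h1 : 1 ≤ A.card := Finset.card_pos.mpr ⟨j, h⟩
    rw [if_pos h, Finset.card_erase_of_mem h, Nat.odd_iff, Nat.even_iff]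
    omega
  · rw [if_neg h, Finset.card_insert_of_notMem h, Nat.odd_iff, Nat.even_iff]
    omega

lemma mem_tog {n : ℕ} {j i : Fin n} (h : i ≠ j) (A : Finset (Fin n)) :
    i ∈ tog j A ↔ i ∈ A := by
  unfold tog
  by_cases hj : j ∈ A <;> simp [hj, h]

theorem stmt14 (n : ℕ) (hn : 1 < n) :
    ∃ (F G : Type) (_ : Fintype F) (_ : Fintype G)
      (P : Fin n → Set F) (Q : Fin n → Set G),
      IsSymmetricStruct n P ∧ IsSymmetricStruct n Q ∧
      (¬ ∃ e : F ≃ G, ∀ i : Fin n, ∀ x : F, x ∈ P i ↔ e x ∈ Q i) ∧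
      (∃ e : F ≃ G, ∀ i : Fin n, (i : ℕ) < n - 1 → ∀ x : F, x ∈ P i ↔ e x ∈ Q i) := by
  classical
  refine ⟨{A : Finset (Fin n) // Odd A.card}, {A : Finset (Fin n) // Even A.card},
    inferInstance, inferInstance,
    fun i => {A | i ∈ A.1}, fun i => {A | i ∈ A.1}, ?_, ?_, ?_, ?_⟩
  · intro σ
    refine ⟨(Equiv.finsetCongr σ).subtypeEquiv (fun A => by simp), ?_⟩
    intro i x
    simp [Finset.mem_map_equiv]
  · intro σ
    refine ⟨(Equiv.finsetCongr σ).subtypeEquiv (fun A => by simp), ?_⟩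
    intro i x
    simp [Finset.mem_map_equiv]
  · rintro ⟨e, he⟩
    have A : {A : Finset (Fin n) // Odd A.card} := ⟨{⟨0, by omega⟩}, by simp⟩
    have hext : (e A).1 = A.1 := by
      ext i
      exact (he i A).symm
    have h1 : Even (e A).1.card := (e A).2
    rw [hext] at h1
    exact ((Nat.not_even_iff_odd.mpr A.2)) h1
  · have hj : n - 1 < n := by omega
    set j : Fin n := ⟨n - 1, hj⟩ with hjdef
    refine ⟨⟨fun A => ⟨tog j A.1, (card_tog j A.1).mp A.2⟩,
      fun B => ⟨tog j B.1, (card_tog j (tog j B.1)).mpr (by rw [tog_tog]; exact B.2)⟩,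
      fun A => Subtype.ext (tog_tog j A.1),
      fun B => Subtype.ext (tog_tog j B.1)⟩, ?_⟩
    intro i hi x
    have hne : i ≠ j := by
      intro h
      rw [h] at hi
      simp [hjdef] at hi
    exact (mem_tog hne x.1).symm
end

section
/- Let M be an algebraically closed field of characteristic 0 extending ℂ, a ∈ M transcendental over ℂ, and suppose the Galois group of Z^N+Z^{N-1}+a over ℂ(a) is S_N, where N = 2^{n-1} and Θ(a) is the root set. Let X, Y be the odd- and even-cardinality subsets of {1,…,n} with membership predicates Xᵢ, Yᵢ. If φ: X → Θ(a) and ψ: Y → Θ(a) are bijections with Σ_{α∈Xᵢ} φ(α) = Σ_{β∈Yᵢ} ψ(β) for all i = 1,…,n, then a contradiction follows. -/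
/-!
Since the Galois group has order `N!`, the polynomial has `N` distinct roots and the Galois group
realises every transposition `(s t)` of them. Applying it to an integer relation `∑ cₓ x = 0` and
subtracting gives `(c_s - c_t) (s - t) = 0`, so the coefficients of a relation are constant; as the
roots sum to `-1`, they vanish. Thus `Θ(a)` is `ℤ`-linearly independent, subset sums determine the
subset, and `φ`, `ψ` map `{α | i ∈ α}` and `{β | i ∈ β}` onto the same set for every `i`. Hence the
odd set `{0}` and the even set `ψ⁻¹ (φ {0})` have the same elements.
-/

open Equiv Polynomial IntermediateField

section TranspositionInvariance

variable {L : Type*} [AddCommGroup L] [IsAddTorsionFree L] [DecidableEq L] {R : Finset L}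

theorem coeff_eq_of_sum_zsmul_eq_zero_of_swap {c : L → ℤ} (hc : ∑ x ∈ R, c x • x = 0)
    {s t : L} (hs : s ∈ R) (ht : t ∈ R) {σ : L →+ L} (hσ : ∀ x ∈ R, σ x = swap s t x) :
    c s = c t := by
  obtain rfl | hst := eq_or_ne s t
  · rfl
  have hc_swap : ∑ x ∈ R, c (swap s t x) • x = 0 := by
    have hsupp : {x | swap s t x ≠ x} ⊆ R := fun x hx => by
      rcases eq_or_eq_of_swap_apply_ne_self hx with rfl | rfl <;> assumption
    calc ∑ x ∈ R, c (swap s t x) • x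
        = ∑ x ∈ R, c (swap s t x) • swap s t (swap s t x) := by simp only [swap_apply_self]
      _ = ∑ x ∈ R, c x • swap s t x := (swap s t).sum_comp R (fun x => c x • swap s t x) hsupp
      _ = σ (∑ x ∈ R, c x • x) := by
        rw [map_sum]; exact Finset.sum_congr rfl fun x hx => by rw [map_zsmul, hσ x hx]
      _ = 0 := by rw [hc, map_zero]
  have hrel : (c s - c t) • (s - t) = 0 := by
    calc (c s - c t) • (s - t) = ∑ x ∈ R, (c x - c (swap s t x)) • x := by
          rw [Finset.sum_eq_add_of_mem s t hs ht hst fun x _ hx => by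
            rw [swap_apply_of_ne_of_ne hx.1 hx.2, sub_self, zero_smul]]
          simp only [swap_apply_left, swap_apply_right, sub_smul, smul_sub]
          abel
      _ = 0 := by simp only [sub_smul, Finset.sum_sub_distrib, hc, hc_swap, sub_self]
  simpa [sub_eq_zero, hst] using hrel

theorem linearIndepOn_of_sum_ne_zero_of_swap (hR : ∑ x ∈ R, x ≠ 0)
    (hswap : ∀ s ∈ R, ∀ t ∈ R, ∃ σ : L →+ L, ∀ x ∈ R, σ x = swap s t x) :
    LinearIndepOn ℤ id (R : Set L) := by
  refine linearIndepOn_finset_iff.mpr fun c hc s hs => ?_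
  have hconst : ∀ x ∈ R, c x = c s := fun x hx => by
    obtain ⟨σ, hσ⟩ := hswap x hx s hs
    exact coeff_eq_of_sum_zsmul_eq_zero_of_swap hc hx hs hσ
  have : c s • ∑ x ∈ R, x = 0 := by
    rw [Finset.smul_sum, ← hc]
    exact Finset.sum_congr rfl fun x hx => by rw [hconst x hx, id]
  simpa [hR] using this

end TranspositionInvariance

theorem LinearIndepOn.eq_of_sum_eq {k V : Type*} [Ring k] [Nontrivial k] [AddCommGroup V]
    [Module k V] {s : Set V} (hs : LinearIndepOn k id s) {S T : Finset V} (hS : ↑S ⊆ s)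
    (hT : ↑T ⊆ s) (h : ∑ x ∈ S, x = ∑ x ∈ T, x) : S = T := by
  classical
  have hST : LinearIndepOn k id (↑(S ∪ T) : Set V) :=
    hs.mono (by rw [Finset.coe_union]; exact Set.union_subset hS hT)
  have hrel :
      ∑ x ∈ S ∪ T, ((if x ∈ S then 1 else 0) - (if x ∈ T then 1 else 0) : k) • id x = 0 := by
    simp only [sub_smul, ite_smul, one_smul, zero_smul, id, Finset.sum_sub_distrib,
      Finset.sum_ite_mem, Finset.union_inter_cancel_left, Finset.union_inter_cancel_right, h,
      sub_self]
  ext x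
  by_cases hx : x ∈ S ∪ T
  · have := linearIndepOn_finset_iff.mp hST _ hrel x hx
    by_cases hxS : x ∈ S <;> by_cases hxT : x ∈ T <;> simp_all
  · simp only [Finset.mem_union, not_or] at hx
    simp [hx.1, hx.2]

theorem LinearIndepOn.image_eq_of_sum_eq {k V ι κ : Type*} [Ring k] [Nontrivial k]
    [AddCommGroup V] [Module k V] {s : Set V} (hs : LinearIndepOn k id s) {φ : ι → V}
    {ψ : κ → V} {F : Finset ι} {G : Finset κ} (hφ : Set.InjOn φ F) (hψ : Set.InjOn ψ G)
    (hφs : Set.MapsTo φ F s) (hψs : Set.MapsTo ψ G s) (h : ∑ i ∈ F, φ i = ∑ j ∈ G, ψ j) :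
    φ '' F = ψ '' G := by
  classical
  rw [← Finset.coe_image, ← Finset.coe_image]
  refine congrArg _ (hs.eq_of_sum_eq ?_ ?_ ?_)
  · rw [Finset.coe_image]; exact hφs.image_subset
  · rw [Finset.coe_image]; exact hψs.image_subset
  · rwa [Finset.sum_image hφ, Finset.sum_image hψ]

theorem Finset.eq_of_forall_image_eq {ι β : Type*} {φ ψ : Finset ι → β} {s t : Set (Finset ι)}
    (hφ : s.InjOn φ) (hψ : t.InjOn ψ)
    (h : ∀ i, φ '' {α ∈ s | i ∈ α} = ψ '' {β ∈ t | i ∈ β}) {α β : Finset ι} (hα : α ∈ s)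
    (hβ : β ∈ t) (he : φ α = ψ β) : α = β := by
  ext i
  calc i ∈ α ↔ φ α ∈ φ '' {α ∈ s | i ∈ α} := by
        rw [hφ.mem_image_iff (Set.sep_subset _ _) hα]; simp [hα]
    _ ↔ ψ β ∈ ψ '' {β ∈ t | i ∈ β} := by rw [h i, he]
    _ ↔ i ∈ β := by
        rw [hψ.mem_image_iff (Set.sep_subset _ _) hβ]; simp [hβ]

namespace Polynomial.Gal

variable {K : Type*} [Field K] {p : K[X]}

theorem factorial_card_rootSet_eq (E : Type*) [Field E] [Algebra K E]
    [Fact (p.map (algebraMap K E)).Splits] (hGal : Nat.card p.Gal = p.natDegree.factorial) :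
    (Nat.card (p.rootSet E)).factorial = p.natDegree.factorial := by
  refine le_antisymm (Nat.factorial_le ?_) ?_
  · rw [Nat.card_coe_set_eq]
    exact ncard_rootSet_le p E
  · rw [← hGal, ← Nat.card_perm]
    exact Nat.card_le_card_of_injective _ (galActionHom_injective p E)

theorem galActionHom_bijective_of_card_eq_factorial (E : Type*) [Field E] [Algebra K E]
    [Fact (p.map (algebraMap K E)).Splits] (hGal : Nat.card p.Gal = p.natDegree.factorial) :
    Function.Bijective (galActionHom p E) :=
  (Nat.bijective_iff_injective_and_card _).mpr ⟨galActionHom_injective p E, by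
    rw [hGal, Nat.card_perm, factorial_card_rootSet_eq E hGal]⟩

theorem separable_of_card_eq_factorial (hdeg : 1 < p.natDegree)
    (hGal : Nat.card p.Gal = p.natDegree.factorial) : p.Separable := by
  have hp : p ≠ 0 := ne_zero_of_natDegree_gt hdeg
  have := Fact.mk (SplittingField.splits p)
  rw [← card_rootSet_eq_natDegree_iff_of_splits hp (SplittingField.splits p),
    ← Nat.card_eq_fintype_card, ← Nat.factorial_inj' (Or.inr hdeg)]
  exact factorial_card_rootSet_eq _ hGal

theorem exists_algEquiv_apply_eq_swap {E : Type*} [Field E] [Algebra K E] [DecidableEq E]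
    [Fact (p.map (algebraMap K E)).Splits] [Normal K E]
    (hGal : Nat.card p.Gal = p.natDegree.factorial) {s t : E} (hs : s ∈ p.rootSet E)
    (ht : t ∈ p.rootSet E) :
    ∃ ϕ : Gal(E/K), ∀ x ∈ p.rootSet E, ϕ x = swap s t x := by
  obtain ⟨τ, hτ⟩ := (galActionHom_bijective_of_card_eq_factorial E hGal).2 (swap ⟨s, hs⟩ ⟨t, ht⟩)
  obtain ⟨ϕ, rfl⟩ := restrict_surjective p E τ
  refine ⟨ϕ, fun x hx => ?_⟩
  rw [← galActionHom_restrict p E ϕ ⟨x, hx⟩, hτ]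
  exact (Subtype.val_injective.swap_apply (⟨s, hs⟩ : p.rootSet E) ⟨t, ht⟩ ⟨x, hx⟩).symm

theorem algebraMap_nextCoeff_eq_neg_mul_sum_aroots {E : Type*} [Field E] [Algebra K E]
    [DecidableEq E] (hsep : p.Separable) (hsplit : (p.map (algebraMap K E)).Splits) :
    algebraMap K E p.nextCoeff =
      -algebraMap K E p.leadingCoeff * ∑ x ∈ (p.aroots E).toFinset, x := by
  rw [← nextCoeff_map (algebraMap K E).injective,
    hsplit.nextCoeff_eq_neg_sum_roots_mul_leadingCoeff, leadingCoeff_map,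
    ← Multiset.toFinset_eq (nodup_roots hsep.map)]
  simp

theorem linearIndepOn_rootSet_of_card_eq_factorial {E : Type*} [Field E] [CharZero E]
    [Algebra K E] (hdeg : 1 < p.natDegree) (hnext : p.nextCoeff ≠ 0)
    (hGal : Nat.card p.Gal = p.natDegree.factorial) (hsplit : (p.map (algebraMap K E)).Splits) :
    LinearIndepOn ℤ id (p.rootSet E) := by
  classical
  let j : p.SplittingField →ₐ[K] E := SplittingField.lift p hsplit
  have : CharZero p.SplittingField := RingHom.charZero j.toRingHom
  have := Fact.mk (SplittingField.splits p)
  have hsum : ∑ x ∈ (p.aroots p.SplittingField).toFinset, x ≠ 0 := by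
    intro h
    have := algebraMap_nextCoeff_eq_neg_mul_sum_aroots (separable_of_card_eq_factorial hdeg hGal)
      (SplittingField.splits p)
    rw [h, mul_zero, map_eq_zero] at this
    exact hnext this
  have hL : LinearIndepOn ℤ id (p.rootSet p.SplittingField) := by
    rw [rootSet_def]
    refine linearIndepOn_of_sum_ne_zero_of_swap hsum fun s hs t ht => ?_
    obtain ⟨ϕ, hϕ⟩ := exists_algEquiv_apply_eq_swap hGal (s := s) (t := t) (by rwa [rootSet_def])
      (by rwa [rootSet_def])
    exact ⟨ϕ.toAlgHom.toRingHom.toAddMonoidHom, fun x hx => hϕ x (by rwa [rootSet_def])⟩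
  rw [← (SplittingField.splits p).image_rootSet j]
  exact hL.id_imageₛ (f := j.toRingHom.toAddMonoidHom.toIntLinearMap) j.injective.injOn

end Polynomial.Gal

section Trinomial

variable {R : Type*} [Semiring R] [Nontrivial R] {N : ℕ} (c : R)

theorem natDegree_X_pow_add_X_pow_pred_add_C (hN : 2 ≤ N) :
    (X ^ N + X ^ (N - 1) + C c : R[X]).natDegree = N := by
  compute_degree!
  simp [show N ≠ N - 1 by omega, show N ≠ 0 by omega]

theorem nextCoeff_X_pow_add_X_pow_pred_add_C (hN : 2 ≤ N) :
    (X ^ N + X ^ (N - 1) + C c : R[X]).nextCoeff = 1 := by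
  rw [nextCoeff_of_natDegree_pos (by rw [natDegree_X_pow_add_X_pow_pred_add_C c hN]; omega),
    natDegree_X_pow_add_X_pow_pred_add_C c hN]
  simp [coeff_X_pow, coeff_C, show N - 1 ≠ N by omega, show N - 1 ≠ 0 by omega]

end Trinomial

open scoped Classical in
theorem stmt15_general (M : Type*) [Field M] [IsAlgClosed M] [Algebra ℂ M]
    (n : ℕ) (hn : 1 < n) (N : ℕ) (hNdef : N = 2 ^ (n - 1))
    (a : M)
    (hGal : Nonempty
      (((X ^ N + X ^ (N - 1) + C (AdjoinSimple.gen ℂ a) : Polynomial ℂ⟮a⟯)).Gal ≃*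
        Equiv.Perm (Fin N)))
    (Θ : Set M) (hΘ : Θ = {z : M | z ^ N + z ^ (N - 1) + a = 0})
    (φ ψ : Finset (Fin n) → M)
    (hφ : Set.BijOn φ {α | Odd α.card} Θ)
    (hψ : Set.BijOn ψ {β | Even β.card} Θ)
    (hsum : ∀ i : Fin n,
      (∑ α ∈ Finset.univ.filter (fun α : Finset (Fin n) => Odd α.card ∧ i ∈ α), φ α) =
      (∑ β ∈ Finset.univ.filter (fun β : Finset (Fin n) => Even β.card ∧ i ∈ β), ψ β)) :
    False := by
  have hN : 2 ≤ N := hNdef ▸ Nat.le_self_pow (by omega) 2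
  set p : ℂ⟮a⟯[X] := X ^ N + X ^ (N - 1) + C (AdjoinSimple.gen ℂ a)
  have hdeg : p.natDegree = N := natDegree_X_pow_add_X_pow_pred_add_C _ hN
  have hΘp : Θ = p.rootSet M := by
    ext z
    rw [hΘ, mem_rootSet_of_ne (ne_zero_of_natDegree_gt (hdeg ▸ hN))]
    simp [p]
  have hind : LinearIndepOn ℤ id Θ := by
    have : CharZero M := charZero_of_injective_algebraMap (algebraMap ℂ M).injective
    rw [hΘp]
    refine Polynomial.Gal.linearIndepOn_rootSet_of_card_eq_factorial (by omega)
      (by rw [nextCoeff_X_pow_add_X_pow_pred_add_C _ hN]; exact one_ne_zero) ?_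
      (IsAlgClosed.splits _)
    rw [hdeg, Nat.card_congr hGal.some.toEquiv, Nat.card_perm, Nat.card_fin]
  have himage : ∀ i, φ '' {α | Odd α.card ∧ i ∈ α} = ψ '' {β | Even β.card ∧ i ∈ β} := by
    intro i
    have hF : (↑(Finset.univ.filter fun α : Finset (Fin n) => Odd α.card ∧ i ∈ α) : Set _) ⊆
        {α : Finset (Fin n) | Odd α.card} := fun α hα => (Finset.mem_filter.1 hα).2.1
    have hG : (↑(Finset.univ.filter fun β : Finset (Fin n) => Even β.card ∧ i ∈ β) : Set _) ⊆
        {β : Finset (Fin n) | Even β.card} := fun β hβ => (Finset.mem_filter.1 hβ).2.1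
    simpa using hind.image_eq_of_sum_eq (hφ.injOn.mono hF) (hψ.injOn.mono hG)
      (hφ.mapsTo.mono_left hF) (hψ.mapsTo.mono_left hG) (hsum i)
  have hodd : Odd ({⟨0, by omega⟩} : Finset (Fin n)).card := by simp
  obtain ⟨β, hβ, hφβ⟩ := hψ.surjOn (hφ.mapsTo hodd)
  obtain rfl := Finset.eq_of_forall_image_eq hφ.injOn hψ.injOn himage hodd hβ hφβ.symm
  exact Nat.not_even_iff_odd.mpr hodd hβ

open scoped Classical in
theorem stmt15 (M : Type*) [Field M] [IsAlgClosed M] [Algebra ℂ M]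
    (n : ℕ) (hn : 1 < n) (N : ℕ) (hNdef : N = 2 ^ (n - 1))
    (a : M) (ha : Transcendental ℂ a)
    (hGal : Nonempty
      (((X ^ N + X ^ (N - 1) + C (AdjoinSimple.gen ℂ a) : Polynomial ℂ⟮a⟯)).Gal ≃*
        Equiv.Perm (Fin N)))
    (Θ : Set M) (hΘ : Θ = {z : M | z ^ N + z ^ (N - 1) + a = 0})
    (φ ψ : Finset (Fin n) → M)
    (hφ : Set.BijOn φ {α | Odd α.card} Θ)
    (hψ : Set.BijOn ψ {β | Even β.card} Θ)
    (hsum : ∀ i : Fin n,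
      (∑ α ∈ Finset.univ.filter (fun α : Finset (Fin n) => Odd α.card ∧ i ∈ α), φ α) =
      (∑ β ∈ Finset.univ.filter (fun β : Finset (Fin n) => Even β.card ∧ i ∈ β), ψ β)) :
    False :=
  stmt15_general M n hn N hNdef a hGal Θ hΘ φ ψ hφ hψ hsum
end

section
/- Let ζ₁,…,ζ₄ be the distinct roots of X^4+X+a with a transcendental over ℂ, and set s'₁ = ζ₂+ζ₃, s'₂ = ζ₁+ζ₃, s'₃ = ζ₁+ζ₂. Then there is no y such that for every i ∈ {1,2,3} there exists z ≠ y with y^4+y = z^4+z and s'ᵢ = y+z. -/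
private lemma cancel' {M : Type*} [Field M] {a b : M} (h : a * b = 0) (ha : a ≠ 0) :
    b = 0 := (mul_eq_zero.mp h).resolve_left ha

private lemma cubic_rel {M : Type*} [Field M] {y z s : M}
    (hne : z ≠ y) (he : y ^ 4 + y = z ^ 4 + z) (hs : s = y + z) :
    s ^ 3 - 2 * y * s ^ 2 + 2 * y ^ 2 * s + 1 = 0 := by
  have hz : z = s - y := by linear_combination -hs
  subst hz
  have c : (2 * y - s) * (s ^ 3 - 2 * y * s ^ 2 + 2 * y ^ 2 * s + 1) = 0 := by
    linear_combination he
  refine cancel' c ?_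
  intro h0
  apply hne
  linear_combination -h0

theorem stmt17 (M : Type*) [Field M] [IsAlgClosed M] [Algebra ℂ M]
    (a : M) (ha : Transcendental ℂ a)
    (ζ₁ ζ₂ ζ₃ ζ₄ : M)
    (hdist : ζ₁ ≠ ζ₂ ∧ ζ₁ ≠ ζ₃ ∧ ζ₁ ≠ ζ₄ ∧ ζ₂ ≠ ζ₃ ∧ ζ₂ ≠ ζ₄ ∧ ζ₃ ≠ ζ₄)
    (h₁ : ζ₁ ^ 4 + ζ₁ + a = 0) (h₂ : ζ₂ ^ 4 + ζ₂ + a = 0)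
    (h₃ : ζ₃ ^ 4 + ζ₃ + a = 0) (h₄ : ζ₄ ^ 4 + ζ₄ + a = 0) :
    ¬ ∃ y : M,
      (∃ z : M, z ≠ y ∧ y ^ 4 + y = z ^ 4 + z ∧ ζ₂ + ζ₃ = y + z) ∧
      (∃ z : M, z ≠ y ∧ y ^ 4 + y = z ^ 4 + z ∧ ζ₁ + ζ₃ = y + z) ∧
      (∃ z : M, z ≠ y ∧ y ^ 4 + y = z ^ 4 + z ∧ ζ₁ + ζ₂ = y + z) := by
  have : CharZero M := charZero_of_injective_algebraMap (algebraMap ℂ M).injective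
  obtain ⟨d12, d13, d14, d23, d24, d34⟩ := hdist
  rintro ⟨y, ⟨z₁, hn₁, he₁, hs₁⟩, ⟨z₂, hn₂, he₂, hs₂⟩, ⟨z₃, hn₃, he₃, hs₃⟩⟩
  -- Newton-type relations between pairs of roots
  have A13 : ζ₁ ^ 3 + ζ₁ ^ 2 * ζ₃ + ζ₁ * ζ₃ ^ 2 + ζ₃ ^ 3 + 1 = 0 := by
    have c : (ζ₁ - ζ₃) * (ζ₁ ^ 3 + ζ₁ ^ 2 * ζ₃ + ζ₁ * ζ₃ ^ 2 + ζ₃ ^ 3 + 1) = 0 := by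
      linear_combination h₁ - h₃
    exact cancel' c (sub_ne_zero.mpr d13)
  have A23 : ζ₂ ^ 3 + ζ₂ ^ 2 * ζ₃ + ζ₂ * ζ₃ ^ 2 + ζ₃ ^ 3 + 1 = 0 := by
    have c : (ζ₂ - ζ₃) * (ζ₂ ^ 3 + ζ₂ ^ 2 * ζ₃ + ζ₂ * ζ₃ ^ 2 + ζ₃ ^ 3 + 1) = 0 := by
      linear_combination h₂ - h₃
    exact cancel' c (sub_ne_zero.mpr d23)
  have A14 : ζ₁ ^ 3 + ζ₁ ^ 2 * ζ₄ + ζ₁ * ζ₄ ^ 2 + ζ₄ ^ 3 + 1 = 0 := by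
    have c : (ζ₁ - ζ₄) * (ζ₁ ^ 3 + ζ₁ ^ 2 * ζ₄ + ζ₁ * ζ₄ ^ 2 + ζ₄ ^ 3 + 1) = 0 := by
      linear_combination h₁ - h₄
    exact cancel' c (sub_ne_zero.mpr d14)
  have A24 : ζ₂ ^ 3 + ζ₂ ^ 2 * ζ₄ + ζ₂ * ζ₄ ^ 2 + ζ₄ ^ 3 + 1 = 0 := by
    have c : (ζ₂ - ζ₄) * (ζ₂ ^ 3 + ζ₂ ^ 2 * ζ₄ + ζ₂ * ζ₄ ^ 2 + ζ₄ ^ 3 + 1) = 0 := by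
      linear_combination h₂ - h₄
    exact cancel' c (sub_ne_zero.mpr d24)
  -- sum of roots is zero
  have he : ζ₁ + ζ₂ + ζ₃ + ζ₄ = 0 := by
    have c : (ζ₁ - ζ₂) * ((ζ₃ - ζ₄) * (ζ₁ + ζ₂ + ζ₃ + ζ₄)) = 0 := by
      linear_combination A13 - A23 - A14 + A24
    have c' := cancel' c (sub_ne_zero.mpr d12)
    exact cancel' c' (sub_ne_zero.mpr d34)
  -- the cubic relations for the three sums
  have f₁ := cubic_rel hn₁ he₁ hs₁
  have f₂ := cubic_rel hn₂ he₂ hs₂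
  have f₃ := cubic_rel hn₃ he₃ hs₃
  set s₁ := ζ₂ + ζ₃
  set s₂ := ζ₁ + ζ₃
  set s₃ := ζ₁ + ζ₂
  -- subtract pairs and cancel distinct differences
  have g12 : s₁ ^ 2 + s₁ * s₂ + s₂ ^ 2 - 2 * y * (s₁ + s₂) + 2 * y ^ 2 = 0 := by
    have c : (s₁ - s₂) * (s₁ ^ 2 + s₁ * s₂ + s₂ ^ 2 - 2 * y * (s₁ + s₂) + 2 * y ^ 2) = 0 := by
      linear_combination f₁ - f₂
    refine cancel' c ?_
    have : s₁ - s₂ = ζ₂ - ζ₁ := by ring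
    rw [this]
    exact sub_ne_zero.mpr fun h => d12 h.symm
  have g13 : s₁ ^ 2 + s₁ * s₃ + s₃ ^ 2 - 2 * y * (s₁ + s₃) + 2 * y ^ 2 = 0 := by
    have c : (s₁ - s₃) * (s₁ ^ 2 + s₁ * s₃ + s₃ ^ 2 - 2 * y * (s₁ + s₃) + 2 * y ^ 2) = 0 := by
      linear_combination f₁ - f₃
    refine cancel' c ?_
    have : s₁ - s₃ = ζ₃ - ζ₁ := by ring
    rw [this]
    exact sub_ne_zero.mpr fun h => d13 h.symm
  have hy : s₁ + s₂ + s₃ - 2 * y = 0 := by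
    have c : (s₂ - s₃) * (s₁ + s₂ + s₃ - 2 * y) = 0 := by
      linear_combination g12 - g13
    refine cancel' c ?_
    have : s₂ - s₃ = ζ₃ - ζ₂ := by ring
    rw [this]
    exact sub_ne_zero.mpr fun h => d23 h.symm
  -- hence y = -ζ₄, plug into f₁ and contradict A14
  have hy' : y = -ζ₄ := by linear_combination -hy / 2 + he
  rw [hy'] at f₁
  have f₁' : (-ζ₁ - ζ₄) ^ 3 - 2 * (-ζ₄) * (-ζ₁ - ζ₄) ^ 2 + 2 * ζ₄ ^ 2 * (-ζ₁ - ζ₄) + 1 = 0 := by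
    linear_combination f₁ - ((ζ₂ + ζ₃) ^ 2 + (ζ₂ + ζ₃) * (-ζ₁ - ζ₄) + (ζ₁ + ζ₄) ^ 2
      + 2 * ζ₄ * (ζ₂ + ζ₃ - ζ₁ - ζ₄) + 2 * ζ₄ ^ 2) * he
  have : (2 : M) = 0 := by
    linear_combination f₁' + A14
  exact two_ne_zero this
end
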